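/- Correctness of the reduction from Q‖C_max to P‖C_max: Let p : Fin d → ℕ with p j ≥ 1 for all j, n : Fin d → ℕ, τ ≥ 1, speeds s : Fin τ → ℕ with s i ≥ 1 for all i, machine multiplicities mq : Fin τ → ℕ with ∑_i mq i ≥ 1, and a threshold u ∈ ℕ. Set smax = max_i s i, u' = 2·smax·u + 1 and M = ∑_i mq i. Then the following are equivalent: (1) there exists an assignment x : (Σ i : Fin τ, Fin (mq i)) → Fin d → ℕ with ∑_{machines} x · j = n j for every j and ∑_j p j · x ⟨i,k⟩ j ≤ s i · u for every machine ⟨i,k⟩; (2) there exists a function y : Fin M → (Fin d ⊕ Fin τ) → ℕ with ∑_{l} y l (inl j) = n j for every j, ∑_{l} y l (inr i) = mq i for every i, and for every l ∈ Fin M, ∑_j p j · y l (inl j) + ∑_i (u' − s i · u) · y l (inr i) ≤ u'. -/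
import Mathlib


theorem q_cmax_to_p_cmax_reduction (d τ : ℕ) (hτ : 1 ≤ τ)
    (p : Fin d → ℕ) (hp : ∀ j, 1 ≤ p j) (n : Fin d → ℕ)
    (s : Fin τ → ℕ) (hs : ∀ i, 1 ≤ s i)
    (mq : Fin τ → ℕ) (hmq : 1 ≤ ∑ i, mq i) (u : ℕ)
    (u' : ℕ) (hu' : u' = 2 * Finset.univ.sup s * u + 1) :
    (∃ x : (Σ i : Fin τ, Fin (mq i)) → Fin d → ℕ,
      (∀ j, ∑ mk, x mk j = n j) ∧
      ∀ mk : Σ i : Fin τ, Fin (mq i), (∑ j, p j * x mk j) ≤ s mk.1 * u) ↔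
    (∃ y : Fin (∑ i, mq i) → (Fin d ⊕ Fin τ) → ℕ,
      (∀ j, ∑ l, y l (Sum.inl j) = n j) ∧
      (∀ i, ∑ l, y l (Sum.inr i) = mq i) ∧
      ∀ l, (∑ j, p j * y l (Sum.inl j)) +
        (∑ i, (u' - s i * u) * y l (Sum.inr i)) ≤ u') := by
  have hsS : ∀ i, s i ≤ Finset.univ.sup s := fun i => Finset.le_sup (Finset.mem_univ i)
  have hsu : ∀ i, s i * u ≤ Finset.univ.sup s * u :=
    fun i => Nat.mul_le_mul_right u (hsS i)
  have hu2 : u' = Finset.univ.sup s * u + Finset.univ.sup s * u + 1 := by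
    rw [hu']; ring
  have hsub : ∀ i, s i * u + (u' - s i * u) = u' := by
    intro i; have := hsu i; omega
  have hbig : ∀ i, Finset.univ.sup s * u + 1 ≤ u' - s i * u := by
    intro i; have := hsu i; omega
  constructor
  · rintro ⟨x, hx1, hx2⟩
    have e : (Σ i : Fin τ, Fin (mq i)) ≃ Fin (∑ i, mq i) :=
      Fintype.equivFinOfCardEq (by simp)
    refine ⟨fun l c => match c with
      | Sum.inl j => x (e.symm l) j
      | Sum.inr i => if (e.symm l).1 = i then 1 else 0, ?_, ?_, ?_⟩
    · intro j
      simpa using (Equiv.sum_comp e.symm (fun mk => x mk j)).trans (hx1 j)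
    · intro i
      have h1 : ∑ l, (if (e.symm l).1 = i then 1 else 0) = mq i := by
        rw [Equiv.sum_comp e.symm (fun mk : Σ i : Fin τ, Fin (mq i) =>
          if mk.1 = i then 1 else 0)]
        rw [← Finset.univ_sigma_univ, Finset.sum_sigma]
        simp [Finset.sum_ite_eq', Finset.card_univ, apply_ite Finset.card]
      simpa using h1
    · intro l
      have h2 : ∑ i, (u' - s i * u) * (if (e.symm l).1 = i then 1 else 0)
          = u' - s (e.symm l).1 * u := by
        simp [mul_ite]
      simp only []
      rw [h2]
      calc ∑ j, p j * x (e.symm l) j + (u' - s (e.symm l).1 * u)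
          ≤ s (e.symm l).1 * u + (u' - s (e.symm l).1 * u) :=
            Nat.add_le_add_right (hx2 _) _
        _ = u' := hsub _
  · rintro ⟨y, hy1, hy2, hy3⟩
    -- each machine has at most one dummy job
    have hle : ∀ l, ∑ i, y l (Sum.inr i) ≤ 1 := by
      intro l
      by_contra h
      push_neg at h
      have h2 : 2 ≤ ∑ i, y l (Sum.inr i) := h
      have hlow : ∑ i, (u' - s i * u) * y l (Sum.inr i)
          ≥ (Finset.univ.sup s * u + 1) * ∑ i, y l (Sum.inr i) := by
        rw [Finset.mul_sum]
        exact Finset.sum_le_sum fun i _ => Nat.mul_le_mul_right _ (hbig i)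
      have := hy3 l
      have h3 : (Finset.univ.sup s * u + 1) * 2 ≤
          (Finset.univ.sup s * u + 1) * ∑ i, y l (Sum.inr i) :=
        Nat.mul_le_mul_left _ h2
      omega
    have htot : ∑ l, ∑ i, y l (Sum.inr i) = ∑ l : Fin (∑ i, mq i), 1 := by
      rw [Finset.sum_comm]
      simp [hy2]
    have hone : ∀ l, ∑ i, y l (Sum.inr i) = 1 := by
      intro l
      have := (Finset.sum_eq_sum_iff_of_le (fun l _ => hle l)).mp htot l
        (Finset.mem_univ l)
      simpa using this
    -- extract the unique dummy type per machine
    have hex : ∀ l, ∃ i, y l (Sum.inr i) ≠ 0 := by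
      intro l
      obtain ⟨i, _, hi⟩ := Finset.exists_ne_zero_of_sum_ne_zero
        (s := Finset.univ) (f := fun i => y l (Sum.inr i)) (by rw [hone l]; omega)
      exact ⟨i, hi⟩
    set f : Fin (∑ i, mq i) → Fin τ := fun l => (hex l).choose with hf
    have hfne : ∀ l, y l (Sum.inr (f l)) ≠ 0 := fun l => (hex l).choose_spec
    have hind : ∀ l i, y l (Sum.inr i) = if f l = i then 1 else 0 := by
      intro l i
      have h0 := hone l
      have hmem : f l ∈ Finset.univ := Finset.mem_univ (f l)
      have hsplit : y l (Sum.inr (f l)) +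
          ∑ i ∈ Finset.univ.erase (f l), y l (Sum.inr i)
          = ∑ i, y l (Sum.inr i) :=
        Finset.add_sum_erase Finset.univ (fun i => y l (Sum.inr i)) hmem
      have hfl1 : 1 ≤ y l (Sum.inr (f l)) := Nat.one_le_iff_ne_zero.mpr (hfne l)
      have hrest : ∑ i ∈ Finset.univ.erase (f l), y l (Sum.inr i) = 0 := by omega
      by_cases hi : f l = i
      · subst hi; rw [if_pos rfl]; omega
      · rw [if_neg hi]
        exact (Finset.sum_eq_zero_iff.mp hrest) i
          (Finset.mem_erase.mpr ⟨fun h => hi h.symm, Finset.mem_univ i⟩)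
    have hcard : ∀ i, Fintype.card {l // f l = i} = mq i := by
      intro i
      rw [Fintype.card_subtype, Finset.card_filter]
      have := hy2 i
      rw [← this]
      apply Finset.sum_congr rfl
      intro l _
      rw [hind l i]
    -- build the equivalence
    set E : (Σ i : Fin τ, Fin (mq i)) ≃ Fin (∑ i, mq i) :=
      (Equiv.sigmaCongrRight fun i =>
        (Fintype.equivFinOfCardEq (hcard i)).symm).trans
      (Equiv.sigmaFiberEquiv f) with hE
    have hEfst : ∀ mk : Σ i : Fin τ, Fin (mq i), f (E mk) = mk.1 := by
      rintro ⟨i, k⟩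
      exact ((Fintype.equivFinOfCardEq (hcard i)).symm k).prop
    refine ⟨fun mk j => y (E mk) (Sum.inl j), ?_, ?_⟩
    · intro j
      rw [Equiv.sum_comp E (fun l => y l (Sum.inl j))]
      exact hy1 j
    · intro mk
      have hl := hy3 (E mk)
      have hsum2 : ∑ i, (u' - s i * u) * y (E mk) (Sum.inr i)
          = u' - s mk.1 * u := by
        have : ∀ i, (u' - s i * u) * y (E mk) (Sum.inr i)
            = if mk.1 = i then u' - s i * u else 0 := by
          intro i
          rw [hind, hEfst]
          split <;> simp
        rw [Finset.sum_congr rfl fun i _ => this i]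
        simp
      rw [hsum2] at hl
      have := hsu mk.1
      show ∑ j, p j * y (E mk) (Sum.inl j) ≤ s mk.1 * u
      omega
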